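/- Let the universal depth-p Hamiltonians on configuration space be H'_i(t) = -(κ+h^∨)^{-1} ∑_{j ≠ i} ∑_{m,l=0}^{p-1} Ω^{(ij)}_{ml} binom(m+l,l) (-1)^m (t_i - t_j)^{-1-m-l} and H''_i(t) = (κ+h^∨)^{-1} ∑_{m,l=0}^{p-1} Ω^{(i∞)}_{m,m+l+1} binom(m+l,l) t_i^l. Then for i, j ∈ J' one has ∂H'_j/∂t_i = ∂H'_i/∂t_j and ∂H''_j/∂t_i = 0 for i ≠ j; hence flatness of the connection d - ∑_i (H'_i + H''_i) dt_i is equivalent to the pairwise commutativity [H_i, H_j] = 0 of the Hamiltonians H_i = H'_i + H''_i. -/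

import Mathlib

set_option synthInstance.maxHeartbeats 1000000
set_option maxHeartbeats 1600000

open scoped TensorProduct
open Finset

attribute [local instance 100] LieRing.ofAssociativeRing

/-- Scalar extension of a complex Lie algebra is a complex Lie algebra. -/
noncomputable instance (priority := low) extendScalarsLieAlgebraOverBase
    {A g : Type*} [CommRing A] [Algebra ℂ A] [LieRing g] [LieAlgebra ℂ g] :
    LieAlgebra ℂ (A ⊗[ℂ] g) :=
  { lie_smul := fun c x y => by
      rw [← algebraMap_smul A c y, lie_smul, algebraMap_smul] }

/-- The ring `ℂ[z]/(z^p)` of truncated polynomials. -/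
noncomputable abbrev TruncPoly (p : ℕ) : Type :=
  Polynomial ℂ ⧸ Ideal.span {(Polynomial.X : Polynomial ℂ) ^ p}

/-- The class of `z^m` in `ℂ[z]/(z^p)`. -/
noncomputable def zpow (p m : ℕ) : TruncPoly p :=
  Ideal.Quotient.mk _ ((Polynomial.X : Polynomial ℂ) ^ m)

/-- The truncated current Lie algebra `g_p = g[z]/z^p g[z]`. -/
noncomputable abbrev TruncCurrent (p : ℕ) (g : Type*) [LieRing g] [LieAlgebra ℂ g] :=
  (TruncPoly p) ⊗[ℂ] g

/-- The enveloping algebra `U(g_p)`. -/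
noncomputable abbrev UEnvp (p : ℕ) (g : Type*) [LieRing g] [LieAlgebra ℂ g] :=
  UniversalEnvelopingAlgebra ℂ (TruncCurrent p g)

/-- The canonical embedding `g_p → U(g_p)`. -/
noncomputable def iotaU (p : ℕ) (g : Type*) [LieRing g] [LieAlgebra ℂ g] :
    TruncCurrent p g →ₗ⁅ℂ⁆ UEnvp p g :=
  UniversalEnvelopingAlgebra.ι ℂ

section

variable (p : ℕ) {g : Type*} [LieRing g] [LieAlgebra ℂ g]
  {ι : Type*} [Fintype ι] (b b' : ι → g)
  {n : ℕ} {A : Type*} [Ring A] [Algebra ℂ A]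
  (emb : Fin (n + 1) → (UEnvp p g →ₐ[ℂ] A))

/-- The quadratic tensor `Ω^{(ij)}_{ml} = ∑ₖ (Xₖ z^m)^{(i)} (Xᵏ z^l)^{(j)}` placed in
slots `i, j` of the tensor power `U(g_p)^{⊗|J|}` (realised by the commuting slot
embeddings `emb`). -/
noncomputable def OmSlot (i j : Fin (n + 1)) (m l : ℕ) : A :=
  ∑ k, emb i (iotaU p g (zpow p m ⊗ₜ b k)) * emb j (iotaU p g (zpow p l ⊗ₜ b' k))

/-- The universal depth-`p` Hamiltonian `H'_i(t)`: the interaction between the finite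
marked points. -/
noncomputable def HamPrime (κ h : ℂ) (i : Fin n) (t : Fin n → ℂ) : A :=
  -(κ + h)⁻¹ • ∑ j ∈ univ.erase i, ∑ m ∈ range p, ∑ l ∈ range p,
    (((-1 : ℂ) ^ m * ((m + l).choose l : ℂ)) * (t i - t j) ^ (-(1 : ℤ) - m - l)) •
      OmSlot p b b' emb i.castSucc j.castSucc m l

/-- The universal depth-`p` Hamiltonian `H''_i(t)`: the interaction with the marked
point at infinity (the last slot). -/
noncomputable def HamInfty (κ h : ℂ) (i : Fin n) (t : Fin n → ℂ) : A :=
  (κ + h)⁻¹ • ∑ m ∈ range p, ∑ l ∈ range p,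
    (((m + l).choose l : ℂ) * t i ^ l) •
      OmSlot p b b' emb i.castSucc (Fin.last n) m (m + l + 1)

/-- The total universal Hamiltonian `H_i = H'_i + H''_i`. -/
noncomputable def HamTot (κ h : ℂ) (i : Fin n) (t : Fin n → ℂ) : A :=
  HamPrime p b b' emb κ h i t + HamInfty p b b' emb κ h i t

end
lemma casimir_swap {g : Type*} [LieRing g] [LieAlgebra ℂ g]
    (B : LinearMap.BilinForm ℂ g)
    (hBsymm : ∀ x y : g, B x y = B y x)
    {ι : Type*} [Fintype ι] [DecidableEq ι] (bb : Module.Basis ι ℂ g) (b' : ι → g)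
    (hdual : ∀ i j, B (bb i) (b' j) = if i = j then 1 else 0)
    {M : Type*} [AddCommGroup M] [Module ℂ M]
    (F : g →ₗ[ℂ] g →ₗ[ℂ] M) :
    ∑ k, F (bb k) (b' k) = ∑ k, F (b' k) (bb k) := by
  set G : Matrix ι ι ℂ := Matrix.of fun k j => bb.repr (b' k) j with hG
  set Bg : Matrix ι ι ℂ := Matrix.of fun i j => B (bb i) (bb j) with hBg
  have hB' : ∀ i k, (∑ j, bb.repr (b' k) j * B (bb i) (bb j)) = if i = k then 1 else 0 := by
    intro i k
    calc ∑ j, bb.repr (b' k) j * B (bb i) (bb j)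
        = B (bb i) (∑ j, bb.repr (b' k) j • bb j) := by
          rw [map_sum]; simp [smul_eq_mul]
      _ = B (bb i) (b' k) := by rw [bb.sum_repr]
      _ = if i = k then 1 else 0 := hdual i k
  have h1 : Bg * G.transpose = 1 := by
    ext i k
    simp only [Matrix.mul_apply, Matrix.transpose_apply, hBg, hG, Matrix.of_apply,
      Matrix.one_apply]
    rw [← hB' i k]
    exact Finset.sum_congr rfl fun j _ => mul_comm _ _
  have h2 : G.transpose * Bg = 1 := mul_eq_one_comm.mp h1
  have h3 : Bg.transpose = Bg := by
    ext i j; exact hBsymm (bb j) (bb i)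
  have h4 : Bg * G = 1 := by
    have := congrArg Matrix.transpose h2
    rwa [Matrix.transpose_mul, Matrix.transpose_transpose, h3, Matrix.transpose_one] at this
  have h5 : G = G.transpose := by
    calc G = (G.transpose * Bg) * G := by rw [h2, one_mul]
      _ = G.transpose * (Bg * G) := by rw [Matrix.mul_assoc]
      _ = G.transpose := by rw [h4, Matrix.mul_one]
  have hGs : ∀ k j, G k j = G j k := by
    intro k j
    conv_lhs => rw [h5, Matrix.transpose_apply]
  have hb' : ∀ k, b' k = ∑ j, G k j • bb j := fun k => (bb.sum_repr (b' k)).symm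
  calc ∑ k, F (bb k) (b' k) = ∑ k, ∑ j, G k j • F (bb k) (bb j) := by
        refine Finset.sum_congr rfl fun k _ => ?_
        rw [hb' k, map_sum]
        exact Finset.sum_congr rfl fun j _ => by rw [map_smul]
    _ = ∑ j, ∑ k, G k j • F (bb k) (bb j) := Finset.sum_comm
    _ = ∑ j, ∑ k, G j k • F (bb k) (bb j) := by
        refine Finset.sum_congr rfl fun j _ => Finset.sum_congr rfl fun k _ => by rw [hGs]
    _ = ∑ j, F (b' j) (bb j) := by
        refine Finset.sum_congr rfl fun j _ => ?_
        rw [hb' j, map_sum, LinearMap.sum_apply]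
        exact Finset.sum_congr rfl fun k _ => by rw [map_smul, LinearMap.smul_apply]

lemma omSlot_symm {g : Type*} [LieRing g] [LieAlgebra ℂ g]
    (B : LinearMap.BilinForm ℂ g) (hBsymm : ∀ x y : g, B x y = B y x)
    {ι : Type*} [Fintype ι] [DecidableEq ι] (bb : Module.Basis ι ℂ g) (b' : ι → g)
    (hdual : ∀ i j, B (bb i) (b' j) = if i = j then 1 else 0)
    (p : ℕ) {n : ℕ} {A : Type*} [Ring A] [Algebra ℂ A]
    (emb : Fin (n + 1) → (UEnvp p g →ₐ[ℂ] A))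
    (hcomm : ∀ i j : Fin (n + 1), i ≠ j → ∀ u v : UEnvp p g,
      emb i u * emb j v = emb j v * emb i u)
    (i j : Fin (n + 1)) (hij : i ≠ j) (m l : ℕ) :
    OmSlot p (⇑bb) b' emb j i l m = OmSlot p (⇑bb) b' emb i j m l := by
  set φ : Fin (n + 1) → ℕ → (g →ₗ[ℂ] A) := fun a q =>
    (emb a).toLinearMap ∘ₗ (iotaU p g).toLinearMap ∘ₗ
      (TensorProduct.mk ℂ (TruncPoly p) g (zpow p q)) with hφdef
  set F : g →ₗ[ℂ] g →ₗ[ℂ] A := (LinearMap.mul ℂ A).compl₁₂ (φ i m) (φ j l) with hFdef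
  have hF : ∀ x y : g, F x y = emb i (iotaU p g (zpow p m ⊗ₜ x)) * emb j (iotaU p g (zpow p l ⊗ₜ y)) :=
    fun x y => rfl
  calc OmSlot p (⇑bb) b' emb j i l m
      = ∑ k, F (b' k) (bb k) := by
        unfold OmSlot
        exact Finset.sum_congr rfl fun k _ => (hcomm j i (Ne.symm hij) _ _)
    _ = ∑ k, F (bb k) (b' k) := (casimir_swap B hBsymm bb b' hdual F).symm
    _ = OmSlot p (⇑bb) b' emb i j m l := rfl

lemma scalar_symm (x y : ℕ) (a : ℂ) :
    ((-1:ℂ)^y * (((y+x).choose x : ℕ) : ℂ)) *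
      (((-(1:ℤ) - y - x : ℤ) : ℂ) * (-a) ^ (-(1:ℤ) - (y:ℤ) - x - 1) * (-1))
    = ((-1:ℂ)^x * (((x+y).choose y : ℕ) : ℂ)) *
      (((-(1:ℤ) - x - y : ℤ) : ℂ) * a ^ (-(1:ℤ) - (x:ℤ) - y - 1) * (-1)) := by
  have hC : (y+x).choose x = (x+y).choose y := by
    rw [Nat.add_comm]; exact Nat.choose_symm_add
  have hE : (-(1:ℤ) - (y:ℤ) - x) = (-(1:ℤ) - x - y) := by ring
  have hE' : (-(1:ℤ) - (y:ℤ) - x - 1) = (-(1:ℤ) - (x:ℤ) - y - 1) := by ring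
  rw [hC, hE]
  have hneg : (-a) ^ (-(1:ℤ) - (x:ℤ) - y - 1)
      = (-1:ℂ)^(x+y) * a ^ (-(1:ℤ) - (x:ℤ) - y - 1) := by
    rw [show (-a) = (-1) * a by ring, mul_zpow]
    congr 1
    have h2 : (-(1:ℤ) - (x:ℤ) - y - 1) = -((x + y + 2 : ℕ) : ℤ) := by push_cast; ring
    rw [h2, zpow_neg, zpow_natCast, ← inv_pow]
    norm_num [pow_add]
  rw [hneg]
  have hyy : ((-1:ℂ))^y * (-1)^y = 1 := by rw [← mul_pow]; norm_num
  linear_combination (-((((x+y).choose y : ℕ) : ℂ) * ((-(1:ℤ) - x - y : ℤ) : ℂ) *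
    a ^ (-(1:ℤ) - (x:ℤ) - y - 1) * (-1:ℂ)^x)) * hyy

lemma hamPrime_hasDerivAt {g : Type*} [LieRing g] [LieAlgebra ℂ g]
    {ι : Type*} [Fintype ι] (bb b' : ι → g)
    (p : ℕ) (κ h : ℂ) {n : ℕ} {A : Type*} [Ring A] [Algebra ℂ A]
    (emb : Fin (n + 1) → (UEnvp p g →ₐ[ℂ] A))
    (i j : Fin n) (hij : i ≠ j) (t : Fin n → ℂ) (htij : t j - t i ≠ 0)
    (ψ : A →ₗ[ℂ] ℂ) :
    HasDerivAt (fun s => ψ (HamPrime p bb b' emb κ h j (Function.update t i s)))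
      (-(κ + h)⁻¹ * ∑ m ∈ range p, ∑ l ∈ range p,
        ((-1 : ℂ) ^ m * ((m + l).choose l : ℂ)) *
          (((-(1:ℤ) - m - l : ℤ) : ℂ) * (t j - t i) ^ (-(1:ℤ) - (m:ℤ) - l - 1) * (-1)) *
          ψ (OmSlot p bb b' emb j.castSucc i.castSucc m l)) (t i) := by
  have hji : j ≠ i := Ne.symm hij
  have hfun : (fun s => ψ (HamPrime p bb b' emb κ h j (Function.update t i s)))
      = fun s => -(κ + h)⁻¹ * ∑ k ∈ univ.erase j, ∑ m ∈ range p, ∑ l ∈ range p,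
          (((-1:ℂ)^m * ((m+l).choose l : ℂ)) *
            (t j - Function.update t i s k) ^ (-(1 : ℤ) - m - l)) *
            ψ (OmSlot p bb b' emb j.castSucc k.castSucc m l) := by
    funext s
    simp only [HamPrime, map_smul, map_sum, smul_eq_mul, Function.update_of_ne hji]
  rw [hfun]
  have hsum : HasDerivAt
      (fun s => ∑ k ∈ univ.erase j, ∑ m ∈ range p, ∑ l ∈ range p,
          (((-1:ℂ)^m * ((m+l).choose l : ℂ)) *
            (t j - Function.update t i s k) ^ (-(1 : ℤ) - m - l)) *
            ψ (OmSlot p bb b' emb j.castSucc k.castSucc m l))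
      (∑ k ∈ univ.erase j, if k = i then
          (∑ m ∈ range p, ∑ l ∈ range p,
            ((-1 : ℂ) ^ m * ((m + l).choose l : ℂ)) *
              (((-(1:ℤ) - m - l : ℤ) : ℂ) * (t j - t i) ^ (-(1:ℤ) - (m:ℤ) - l - 1) * (-1)) *
              ψ (OmSlot p bb b' emb j.castSucc k.castSucc m l))
        else 0) (t i) := by
    apply HasDerivAt.fun_sum
    intro k _
    by_cases hki : k = i
    · subst hki
      rw [if_pos rfl]
      simp only [Function.update_self]
      apply HasDerivAt.fun_sum
      intro m _
      apply HasDerivAt.fun_sum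
      intro l _
      have h1 : HasDerivAt (fun s : ℂ => t j - s) (-1) (t k) :=
        (hasDerivAt_id (t k)).const_sub (t j)
      have h2 : HasDerivAt (fun y : ℂ => y ^ (-(1 : ℤ) - m - l))
          (((-(1:ℤ) - m - l : ℤ) : ℂ) * (t j - t k) ^ (-(1:ℤ) - (m:ℤ) - l - 1)) (t j - t k) :=
        hasDerivAt_zpow _ _ (Or.inl htij)
      have h3 := (h2.comp (t k) h1).const_mul ((-1:ℂ)^m * ((m+l).choose l : ℂ))
      exact h3.mul_const _
    · rw [if_neg hki]
      simp only [Function.update_of_ne hki]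
      exact hasDerivAt_const _ _
  have hval : (∑ k ∈ univ.erase j, if k = i then
          (∑ m ∈ range p, ∑ l ∈ range p,
            ((-1 : ℂ) ^ m * ((m + l).choose l : ℂ)) *
              (((-(1:ℤ) - m - l : ℤ) : ℂ) * (t j - t i) ^ (-(1:ℤ) - (m:ℤ) - l - 1) * (-1)) *
              ψ (OmSlot p bb b' emb j.castSucc k.castSucc m l))
        else 0)
      = ∑ m ∈ range p, ∑ l ∈ range p,
          ((-1 : ℂ) ^ m * ((m + l).choose l : ℂ)) *
            (((-(1:ℤ) - m - l : ℤ) : ℂ) * (t j - t i) ^ (-(1:ℤ) - (m:ℤ) - l - 1) * (-1)) *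
            ψ (OmSlot p bb b' emb j.castSucc i.castSucc m l) := by
    rw [Finset.sum_ite_eq' (univ.erase j) i]
    rw [if_pos (Finset.mem_erase.mpr ⟨hij, Finset.mem_univ i⟩)]
  have := hsum.const_mul (-(κ + h)⁻¹)
  rwa [hval] at this

/-- For the universal depth-`p` Hamiltonians `H'ᵢ, H''ᵢ` on configuration space one has
`∂H'ⱼ/∂tᵢ = ∂H'ᵢ/∂tⱼ` and `∂H''ⱼ/∂tᵢ = 0` for `i ≠ j`; hence flatness of the universal
connection `∇_p = d - ∑ᵢ (H'ᵢ + H''ᵢ) dtᵢ` is equivalent to pairwise commutativity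
`[Hᵢ, Hⱼ] = 0` of the Hamiltonians `Hᵢ = H'ᵢ + H''ᵢ`.  (Partial derivatives of the
`U(g_p)^{⊗|J|}`-valued functions are expressed through arbitrary linear functionals
`ψ`, which separate points.) -/
theorem universal_hamiltonians_flatness_iff_commutativity
    {g : Type*} [LieRing g] [LieAlgebra ℂ g] [Module.Finite ℂ g]
    [LieAlgebra.IsSimple ℂ g]
    (B : LinearMap.BilinForm ℂ g) (hBnd : B.Nondegenerate)
    (hBsymm : ∀ x y : g, B x y = B y x)
    (hBinv : ∀ x y z : g, B ⁅x, y⁆ z = B x ⁅y, z⁆)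
    {ι : Type*} [Fintype ι] [DecidableEq ι] (b : Module.Basis ι ℂ g) (b' : ι → g)
    (hdual : ∀ i j, B (b i) (b' j) = if i = j then 1 else 0)
    (p : ℕ) (hp : 1 ≤ p) (κ h : ℂ) (hκ : κ + h ≠ 0)
    {n : ℕ} {A : Type*} [Ring A] [Algebra ℂ A]
    (emb : Fin (n + 1) → (UEnvp p g →ₐ[ℂ] A))
    (hcomm : ∀ i j : Fin (n + 1), i ≠ j → ∀ u v : UEnvp p g,
      emb i u * emb j v = emb j v * emb i u) :
    (∀ t : Fin n → ℂ, Function.Injective t → ∀ i j : Fin n, i ≠ j →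
      ∀ ψ : A →ₗ[ℂ] ℂ,
        deriv (fun s => ψ (HamPrime p (⇑b) b' emb κ h j (Function.update t i s))) (t i)
          = deriv (fun s => ψ (HamPrime p (⇑b) b' emb κ h i (Function.update t j s)))
              (t j)) ∧
    (∀ t : Fin n → ℂ, Function.Injective t → ∀ i j : Fin n, i ≠ j →
      ∀ ψ : A →ₗ[ℂ] ℂ,
        deriv (fun s => ψ (HamInfty p (⇑b) b' emb κ h j (Function.update t i s))) (t i)
          = 0) ∧
    ((∀ t : Fin n → ℂ, Function.Injective t → ∀ i j : Fin n, i ≠ j →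
        ∀ ψ : A →ₗ[ℂ] ℂ,
          deriv (fun s => ψ (HamTot p (⇑b) b' emb κ h j (Function.update t i s))) (t i)
            - deriv (fun s => ψ (HamTot p (⇑b) b' emb κ h i (Function.update t j s)))
                (t j)
            - ψ (HamTot p (⇑b) b' emb κ h i t * HamTot p (⇑b) b' emb κ h j t
                - HamTot p (⇑b) b' emb κ h j t * HamTot p (⇑b) b' emb κ h i t) = 0)
      ↔ (∀ t : Fin n → ℂ, Function.Injective t → ∀ i j : Fin n,
          HamTot p (⇑b) b' emb κ h i t * HamTot p (⇑b) b' emb κ h j t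
            = HamTot p (⇑b) b' emb κ h j t * HamTot p (⇑b) b' emb κ h i t)) := by
  -- symmetry of the prime Hamiltonians' derivatives
  have hPrimeSymm : ∀ t : Fin n → ℂ, Function.Injective t → ∀ i j : Fin n, i ≠ j →
      ∀ ψ : A →ₗ[ℂ] ℂ,
        deriv (fun s => ψ (HamPrime p (⇑b) b' emb κ h j (Function.update t i s))) (t i)
          = deriv (fun s => ψ (HamPrime p (⇑b) b' emb κ h i (Function.update t j s)))
              (t j) := by
    intro t ht i j hij ψ
    have h1 := (hamPrime_hasDerivAt (⇑b) b' p κ h emb i j hij t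
      (sub_ne_zero.mpr (ht.ne (Ne.symm hij))) ψ).deriv
    have h2 := (hamPrime_hasDerivAt (⇑b) b' p κ h emb j i (Ne.symm hij) t
      (sub_ne_zero.mpr (ht.ne hij)) ψ).deriv
    rw [h1, h2]
    congr 1
    rw [Finset.sum_comm]
    refine Finset.sum_congr rfl fun x _ => Finset.sum_congr rfl fun y _ => ?_
    rw [omSlot_symm B hBsymm b b' hdual p emb hcomm i.castSucc j.castSucc
      ((Fin.castSucc_injective n).ne hij) x y]
    have hs := scalar_symm x y (t i - t j)
    rw [show -(t i - t j) = t j - t i by ring] at hs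
    rw [hs]
  -- the infinity Hamiltonians are constant in the other variables
  have hInftyConst : ∀ t : Fin n → ℂ, ∀ i j : Fin n, i ≠ j →
      ∀ ψ : A →ₗ[ℂ] ℂ, ∀ s : ℂ,
        ψ (HamInfty p (⇑b) b' emb κ h j (Function.update t i s))
          = ψ (HamInfty p (⇑b) b' emb κ h j t) := by
    intro t i j hij ψ s
    simp only [HamInfty, Function.update_of_ne (Ne.symm hij)]
  have hInftyDeriv : ∀ t : Fin n → ℂ, ∀ i j : Fin n, i ≠ j →
      ∀ ψ : A →ₗ[ℂ] ℂ,
        deriv (fun s => ψ (HamInfty p (⇑b) b' emb κ h j (Function.update t i s))) (t i)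
          = 0 := by
    intro t i j hij ψ
    have : (fun s => ψ (HamInfty p (⇑b) b' emb κ h j (Function.update t i s)))
        = fun _ => ψ (HamInfty p (⇑b) b' emb κ h j t) := by
      funext s; exact hInftyConst t i j hij ψ s
    rw [this]
    exact deriv_const _ _
  -- the total derivative is the prime derivative
  have hTotDeriv : ∀ t : Fin n → ℂ, ∀ i j : Fin n, i ≠ j →
      ∀ ψ : A →ₗ[ℂ] ℂ,
        deriv (fun s => ψ (HamTot p (⇑b) b' emb κ h j (Function.update t i s))) (t i)
          = deriv (fun s => ψ (HamPrime p (⇑b) b' emb κ h j (Function.update t i s)))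
              (t i) := by
    intro t i j hij ψ
    have : (fun s => ψ (HamTot p (⇑b) b' emb κ h j (Function.update t i s)))
        = fun s => ψ (HamPrime p (⇑b) b' emb κ h j (Function.update t i s))
            + ψ (HamInfty p (⇑b) b' emb κ h j t) := by
      funext s
      rw [HamTot, map_add, hInftyConst t i j hij ψ s]
    rw [this, deriv_add_const]
  refine ⟨hPrimeSymm, fun t ht i j hij ψ => hInftyDeriv t i j hij ψ, ?_⟩
  have hderivEq : ∀ t : Fin n → ℂ, Function.Injective t → ∀ i j : Fin n, i ≠ j →
      ∀ ψ : A →ₗ[ℂ] ℂ,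
        deriv (fun s => ψ (HamTot p (⇑b) b' emb κ h j (Function.update t i s))) (t i)
          = deriv (fun s => ψ (HamTot p (⇑b) b' emb κ h i (Function.update t j s))) (t j) := by
    intro t ht i j hij ψ
    rw [hTotDeriv t i j hij ψ, hTotDeriv t j i (Ne.symm hij) ψ, hPrimeSymm t ht i j hij ψ]
  constructor
  · intro hflat t ht i j
    by_cases hij : i = j
    · subst hij; rfl
    · have hψ : ∀ ψ : A →ₗ[ℂ] ℂ,
          ψ (HamTot p (⇑b) b' emb κ h i t * HamTot p (⇑b) b' emb κ h j t
            - HamTot p (⇑b) b' emb κ h j t * HamTot p (⇑b) b' emb κ h i t) = 0 := by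
        intro ψ
        have hf := hflat t ht i j hij ψ
        rw [hderivEq t ht i j hij ψ, sub_self, zero_sub, neg_eq_zero] at hf
        exact hf
      have h0 : HamTot p (⇑b) b' emb κ h i t * HamTot p (⇑b) b' emb κ h j t
          - HamTot p (⇑b) b' emb κ h j t * HamTot p (⇑b) b' emb κ h i t = 0 :=
        (Module.forall_dual_apply_eq_zero_iff ℂ _).mp hψ
      exact sub_eq_zero.mp h0
  · intro hc t ht i j hij ψ
    rw [hderivEq t ht i j hij ψ, sub_self, zero_sub, neg_eq_zero,
      hc t ht i j, sub_self, map_zero]
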